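/- Let I be a finite set with |I| = M ≥ 1. Let X₁, …, X_{⌈4M⌉} be independent uniform samples from I and let S^{rep} = {X₁, …, X_{⌈4M⌉}} be the (random) set of values observed at least once. Let S^{ind} ⊆ I be the random subset including each element of I independently with probability 1 − e^{−2}. Then for every family U of subsets of I that is upward closed under inclusion (i.e., A ∈ U and A ⊆ B ⊆ I imply B ∈ U), P(S^{rep} ∈ U) ≥ P(S^{ind} ∈ U) − exp(−(4 log 2 − 2) M). -/

import Mathlib

open MeasureTheory

open Finset
open scoped ENNReal Nat

section Aux

/-! ### Counting lemmas -/

variable {I : Type*} [Fintype I] [DecidableEq I]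

open scoped Classical in
/-- Number of tuples in `Fin k → I` whose image lies in `U`. -/
noncomputable def goodCount (U : Set (Finset I)) (k : ℕ) : ℕ :=
  (univ.filter fun X : Fin k → I => univ.image X ∈ U).card

open scoped Classical in
/-- Number of tuples in `Fin k → I` whose image is exactly `A`. -/
noncomputable def exactCount (A : Finset I) (k : ℕ) : ℕ :=
  (univ.filter fun X : Fin k → I => univ.image X = A).card

open scoped Classical in
theorem count1 (U : Set (Finset I)) (k : ℕ) :
    ∑ A ∈ univ.filter (· ∈ U), exactCount A k = goodCount U k := by
  classical
  rw [goodCount]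
  rw [Finset.card_eq_sum_card_fiberwise
    (f := fun X : Fin k → I => univ.image X) (t := univ.filter (· ∈ U))
    (fun X hX => by simpa using (Finset.mem_filter.mp hX).2)]
  refine Finset.sum_congr rfl fun A hA => ?_
  have hAU : A ∈ U := (Finset.mem_filter.mp hA).2
  rw [exactCount]
  congr 1
  ext X
  simp only [Finset.filter_filter, Finset.mem_filter, Finset.mem_univ, true_and]
  constructor
  · intro h; exact ⟨by rw [h]; exact hAU, h⟩
  · tauto

open scoped Classical in
theorem count2 (A : Finset I) (k : ℕ) :
    ∑ B ∈ A.powerset, exactCount B k = A.card ^ k := by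
  classical
  have h1 := Finset.card_eq_sum_card_fiberwise (s := Fintype.piFinset fun _ : Fin k => A)
    (f := fun X : Fin k → I => univ.image X) (t := A.powerset)
    (fun X hX => by
      simp only [Finset.mem_coe, Finset.mem_powerset, Finset.image_subset_iff]
      intro j _; exact Fintype.mem_piFinset.mp hX j)
  have h2 : (Fintype.piFinset fun _ : Fin k => A).card = A.card ^ k := by
    rw [Fintype.card_piFinset]; simp
  rw [← h2, h1]
  refine Finset.sum_congr rfl fun B hB => ?_
  rw [exactCount]
  congr 1
  ext X
  simp only [Finset.mem_filter, Fintype.mem_piFinset, Finset.mem_univ, true_and]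
  constructor
  · intro h
    refine ⟨fun j => ?_, h⟩
    have hj : X j ∈ univ.image X := Finset.mem_image_of_mem X (Finset.mem_univ j)
    rw [h] at hj
    exact Finset.mem_powerset.mp hB hj
  · tauto

omit [Fintype I] in
theorem image_le_snoc (k : ℕ) (x : Fin k → I) (i : I) :
    univ.image x ⊆ univ.image (Fin.snoc x i : Fin (k+1) → I) := by
  intro a ha
  obtain ⟨j, _, hj⟩ := Finset.mem_image.mp ha
  refine Finset.mem_image.mpr ⟨Fin.castSucc j, Finset.mem_univ _, ?_⟩
  rw [Fin.snoc_castSucc]; exact hj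

open scoped Classical in
theorem count3 {U : Set (Finset I)} (hU : ∀ A B : Finset I, A ∈ U → A ⊆ B → B ∈ U)
    (k : ℕ) : goodCount U k * Fintype.card I ≤ goodCount U (k+1) := by
  classical
  have key : ((univ.filter fun X : Fin k → I => univ.image X ∈ U) ×ˢ (univ : Finset I)).card ≤
      (univ.filter fun X : Fin (k+1) → I => univ.image X ∈ U).card := by
    apply Finset.card_le_card_of_injOn (fun p => Fin.snoc p.1 p.2)
    · rintro ⟨x, i⟩ hp
      simp only [Finset.mem_coe, Finset.mem_product, Finset.mem_filter, Finset.mem_univ, true_and] at hp ⊢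
      exact hU _ _ hp.1 (image_le_snoc k x i)
    · rintro ⟨x, i⟩ _ ⟨y, j⟩ _ h
      have h1 : i = j := by
        have := congr_fun h (Fin.last k)
        simpa [Fin.snoc_last] using this
      have h2 : x = y := by
        funext a
        have := congr_fun h (Fin.castSucc a)
        simpa [Fin.snoc_castSucc] using this
      simp [h1, h2]
  simpa [goodCount, Finset.card_product] using key

open scoped Classical in
theorem goodCount_le (U : Set (Finset I)) (k : ℕ) :
    goodCount U k ≤ Fintype.card I ^ k := by
  classical
  calc goodCount U k ≤ (univ : Finset (Fin k → I)).card := Finset.card_filter_le _ _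
  _ = Fintype.card I ^ k := by rw [Finset.card_univ]; simp

/-! ### Measure computation lemmas -/

theorem measure_coe_finset {α : Type*} [MeasurableSpace α] [MeasurableSingletonClass α]
    (μ : Measure α) (s : Finset α) : μ ↑s = ∑ x ∈ s, μ {x} := by
  have : (↑s : Set α) = ⋃ x ∈ s, {x} := by ext y; simp
  rw [this, measure_biUnion_finset ?_ (fun _ _ => measurableSet_singleton _)]
  intro x _ y _ hxy
  simp [Function.onFun, Set.disjoint_singleton, hxy]

theorem pi_measure_singleton {ι : Type*} [Fintype ι] {α : ι → Type*}
    [∀ i, MeasurableSpace (α i)] (μ : ∀ i, Measure (α i)) [∀ i, SigmaFinite (μ i)]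
    (x : ∀ i, α i) : Measure.pi μ {x} = ∏ i, μ i {x i} := by
  have : ({x} : Set (∀ i, α i)) = Set.pi Set.univ (fun i => {x i}) := by
    ext y; simp [funext_iff, Set.mem_pi]
  rw [this, Measure.pi_pi]

open scoped Classical in
theorem rep_measure {I : Type*} [Fintype I] [Nonempty I] [DecidableEq I]
    [MeasurableSpace I] [MeasurableSingletonClass I] (U : Set (Finset I)) (k : ℕ) :
    Measure.pi (fun _ : Fin k => (PMF.uniformOfFintype I).toMeasure)
      {X | Finset.univ.image X ∈ U} =
    (goodCount U k : ℝ≥0∞) * ((Fintype.card I : ℝ≥0∞))⁻¹ ^ k := by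
  classical
  have hset : {X : Fin k → I | Finset.univ.image X ∈ U} =
      ↑(univ.filter fun X : Fin k → I => univ.image X ∈ U) := by
    ext X; simp
  rw [hset, measure_coe_finset]
  have hsing : ∀ x : Fin k → I,
      Measure.pi (fun _ : Fin k => (PMF.uniformOfFintype I).toMeasure) {x}
        = ((Fintype.card I : ℝ≥0∞))⁻¹ ^ k := by
    intro x
    rw [pi_measure_singleton]
    have : ∀ i : Fin k, (PMF.uniformOfFintype I).toMeasure {x i}
        = ((Fintype.card I : ℝ≥0∞))⁻¹ := by
      intro i
      rw [PMF.toMeasure_apply_singleton _ _ (measurableSet_singleton _),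
        PMF.uniformOfFintype_apply]
    simp [this]
  simp only [hsing, Finset.sum_const, nsmul_eq_mul]
  rw [goodCount]

open scoped Classical in
theorem ind_measure {I : Type*} [Fintype I] [DecidableEq I]
    (U : Set (Finset I)) (p : NNReal) (hp : p ≤ 1) :
    Measure.pi (fun _ : I => (PMF.bernoulli p hp).toMeasure)
      {ω | (Finset.univ.filter fun i => ω i = true) ∈ U} =
    ∑ A ∈ univ.filter (· ∈ U), (p : ℝ≥0∞) ^ A.card * (1 - (p : ℝ≥0∞)) ^ (Fintype.card I - A.card) := by
  classical
  have hset : {ω : I → Bool | (Finset.univ.filter fun i => ω i = true) ∈ U} =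
      ↑(univ.filter fun ω : I → Bool => (Finset.univ.filter fun i => ω i = true) ∈ U) := by
    ext ω; simp
  rw [hset, measure_coe_finset]
  have hsing : ∀ ω : I → Bool,
      Measure.pi (fun _ : I => (PMF.bernoulli p hp).toMeasure) {ω}
        = (p : ℝ≥0∞) ^ (univ.filter fun i => ω i = true).card *
          (1 - (p : ℝ≥0∞)) ^ (Fintype.card I - (univ.filter fun i => ω i = true).card) := by
    intro ω
    rw [pi_measure_singleton]
    have hb : ∀ i, (PMF.bernoulli p hp).toMeasure {ω i} = if ω i = true then (p : ℝ≥0∞) else 1 - (p : ℝ≥0∞) := by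
      intro i
      rw [PMF.toMeasure_apply_singleton _ _ (measurableSet_singleton _), PMF.bernoulli_apply]
      cases ω i <;> simp
    simp only [hb]
    rw [Finset.prod_ite, Finset.prod_const, Finset.prod_const]
    congr 2
    have := Finset.card_filter_add_card_filter_not
      (s := (univ : Finset I)) (p := fun i => ω i = true)
    rw [Finset.card_univ] at this
    omega
  simp only [hsing]
  refine Finset.sum_nbij' (fun ω => univ.filter fun i => ω i = true)
    (fun A => fun i => decide (i ∈ A)) ?_ ?_ ?_ ?_ ?_
  · intro ω hω
    simp only [Finset.mem_filter, Finset.mem_univ, true_and] at hω ⊢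
    exact hω
  · intro A hA
    simp only [Finset.mem_filter, Finset.mem_univ, true_and] at hA ⊢
    have : (univ.filter fun i => decide (i ∈ A) = true) = A := by
      ext i; simp
    rw [this]; exact hA
  · intro ω hω
    funext i
    simp
  · intro A hA
    ext i; simp
  · intro ω hω
    rfl

/-! ### Analytic lemmas -/

theorem real_exp_tsum (x : ℝ) : Real.exp x = ∑' n : ℕ, x ^ n / n ! := by
  rw [Real.exp_eq_exp_ℝ, NormedSpace.exp_eq_tsum_div]

theorem pois_tsum (lam c : ℝ) (hl : 0 ≤ lam) (hc : 0 ≤ c) :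
    ∑' k : ℕ, ENNReal.ofReal (Real.exp (-lam) * lam ^ k / k ! * c ^ k)
      = ENNReal.ofReal (Real.exp (-lam) * Real.exp (lam * c)) := by
  have hfun : (fun k : ℕ => Real.exp (-lam) * lam ^ k / k ! * c ^ k)
      = fun k : ℕ => Real.exp (-lam) * ((lam * c) ^ k / k !) := by
    funext k; rw [mul_pow]; ring
  have hsum : Summable fun k : ℕ => Real.exp (-lam) * ((lam * c) ^ k / k !) :=
    (Real.summable_pow_div_factorial (lam * c)).mul_left _
  have : ∀ k : ℕ, ENNReal.ofReal (Real.exp (-lam) * lam ^ k / k ! * c ^ k)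
      = ENNReal.ofReal (Real.exp (-lam) * ((lam * c) ^ k / k !)) := fun k => by
    rw [congr_fun hfun k]
  simp only [this]
  rw [← ENNReal.ofReal_tsum_of_nonneg (fun k => by positivity) hsum,
    tsum_mul_left, ← real_exp_tsum]

theorem downsum_cancel {α : Type*} [DecidableEq α] (G H : Finset α → ℝ≥0∞)
    (hfin : ∀ A : Finset α, (∑ B ∈ A.powerset, G B) ≠ ⊤)
    (h : ∀ A : Finset α, ∑ B ∈ A.powerset, G B = ∑ B ∈ A.powerset, H B) :
    ∀ A : Finset α, G A = H A := by
  intro A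
  induction A using Finset.strongInduction with
  | _ A ih =>
    have hmem : A ∈ A.powerset := Finset.mem_powerset_self A
    have h1 := h A
    rw [← Finset.sum_erase_add _ _ hmem, ← Finset.sum_erase_add _ _ hmem] at h1
    have h2 : ∑ B ∈ A.powerset.erase A, G B = ∑ B ∈ A.powerset.erase A, H B := by
      refine Finset.sum_congr rfl fun B hB => ?_
      have hBA : B ⊂ A := by
        rw [Finset.mem_erase, Finset.mem_powerset] at hB
        exact lt_of_le_of_ne hB.2 hB.1
      exact ih B hBA
    rw [h2] at h1
    have hfin' : ∑ B ∈ A.powerset.erase A, H B ≠ ⊤ := by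
      rw [← h2]
      intro hT
      apply hfin A
      rw [← Finset.sum_erase_add _ _ hmem, hT, top_add]
    exact WithTop.add_left_cancel hfin' h1

end Aux

open scoped ENNReal Nat

theorem enn_inv_nat (Mn : ℕ) (hM : 0 < Mn) :
    ((Mn : ℝ≥0∞))⁻¹ = ENNReal.ofReal ((Mn : ℝ)⁻¹) := by
  have hMpos : (0:ℝ) < Mn := by positivity
  rw [← ENNReal.ofReal_natCast Mn, ← ENNReal.ofReal_inv_of_pos hMpos]

theorem term_eq (Mn a k : ℕ) (hM : 0 < Mn) :
    ENNReal.ofReal (Real.exp (-(2*(Mn:ℝ))) * (2*(Mn:ℝ))^k / k !) * ((Mn:ℝ≥0∞))⁻¹ ^ k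
        * ((a : ℝ≥0∞)) ^ k
      = ENNReal.ofReal (Real.exp (-(2*(Mn:ℝ))) * (2*(Mn:ℝ))^k / k ! * ((a:ℝ)/Mn)^k) := by
  have hMpos : (0:ℝ) < Mn := by positivity
  rw [enn_inv_nat Mn hM, ← ENNReal.ofReal_natCast a,
    ← ENNReal.ofReal_pow (by positivity), ← ENNReal.ofReal_pow (by positivity),
    ← ENNReal.ofReal_mul (by positivity), ← ENNReal.ofReal_mul (by positivity)]
  congr 1
  field_simp
  rw [← mul_pow]; congr 1; ring

theorem pois_mul_tsum (Mn a : ℕ) (hM : 0 < Mn) :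
    ∑' k : ℕ, ENNReal.ofReal (Real.exp (-(2*(Mn:ℝ))) * (2*(Mn:ℝ))^k / k !)
        * ((Mn:ℝ≥0∞))⁻¹ ^ k * ((a : ℝ≥0∞)) ^ k
      = ENNReal.ofReal (Real.exp (-(2*(Mn:ℝ))) * Real.exp (2*(a:ℝ))) := by
  have hMpos : (0:ℝ) < Mn := by positivity
  simp only [term_eq Mn a _ hM]
  rw [pois_tsum (2*(Mn:ℝ)) ((a:ℝ)/Mn) (by positivity) (by positivity)]
  congr 2
  field_simp

section Down
variable {I : Type*} [Fintype I] [Nonempty I] [DecidableEq I]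

open scoped Classical in
theorem downsum_G (A : Finset I) :
    ∑ B ∈ A.powerset, ∑' k : ℕ,
        ENNReal.ofReal (Real.exp (-(2*(Fintype.card I:ℝ))) * (2*(Fintype.card I:ℝ))^k / k !)
          * ((Fintype.card I:ℝ≥0∞))⁻¹ ^ k * ((exactCount B k : ℝ≥0∞))
      = ENNReal.ofReal (Real.exp (-(2*(Fintype.card I:ℝ))) * Real.exp (2*(A.card:ℝ))) := by
  classical
  rw [← Summable.tsum_finsetSum (fun B _ => ENNReal.summable)]
  have hswap : ∀ k : ℕ, ∑ B ∈ A.powerset,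
      ENNReal.ofReal (Real.exp (-(2*(Fintype.card I:ℝ))) * (2*(Fintype.card I:ℝ))^k / k !)
        * ((Fintype.card I:ℝ≥0∞))⁻¹ ^ k * ((exactCount B k : ℝ≥0∞))
      = ENNReal.ofReal (Real.exp (-(2*(Fintype.card I:ℝ))) * (2*(Fintype.card I:ℝ))^k / k !)
        * ((Fintype.card I:ℝ≥0∞))⁻¹ ^ k * ((A.card : ℝ≥0∞)) ^ k := by
    intro k
    rw [← Finset.mul_sum]
    congr 1
    rw [← Nat.cast_sum, count2, Nat.cast_pow]
  simp only [hswap]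
  exact pois_mul_tsum (Fintype.card I) A.card Fintype.card_pos

open scoped Classical in
theorem downsum_H (A : Finset I) :
    ∑ B ∈ A.powerset, (ENNReal.ofReal (1 - Real.exp (-2))) ^ B.card *
        (1 - ENNReal.ofReal (1 - Real.exp (-2))) ^ (Fintype.card I - B.card)
      = ENNReal.ofReal (Real.exp (-(2*(Fintype.card I:ℝ))) * Real.exp (2*(A.card:ℝ))) := by
  classical
  set p : ℝ≥0∞ := ENNReal.ofReal (1 - Real.exp (-2)) with hpdef
  set q : ℝ≥0∞ := ENNReal.ofReal (Real.exp (-2)) with hqdef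
  have hexp_le : Real.exp (-2) ≤ 1 := Real.exp_le_one_iff.mpr (by norm_num)
  have hpq : p + q = 1 := by
    rw [hpdef, hqdef, ← ENNReal.ofReal_add (by linarith) (Real.exp_pos _).le]
    norm_num
  have hq1 : 1 - p = q := by
    refine ENNReal.sub_eq_of_eq_add ENNReal.ofReal_ne_top ?_
    rw [add_comm, hpq]
  have hcard : A.card ≤ Fintype.card I := A.card_le_univ
  have hterm : ∀ B ∈ A.powerset, p ^ B.card * (1 - p) ^ (Fintype.card I - B.card)
      = q ^ (Fintype.card I - A.card) * (p ^ B.card * q ^ (A.card - B.card)) := by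
    intro B hB
    have hBA : B.card ≤ A.card := Finset.card_le_card (Finset.mem_powerset.mp hB)
    rw [hq1]
    have : Fintype.card I - B.card = (Fintype.card I - A.card) + (A.card - B.card) := by omega
    rw [this, pow_add]
    ring
  rw [Finset.sum_congr rfl hterm, ← Finset.mul_sum]
  have hbin : ∑ B ∈ A.powerset, p ^ B.card * q ^ (A.card - B.card) = 1 := by
    have := Finset.prod_add (fun _ : I => p) (fun _ : I => q) A
    simp only [Finset.prod_const, hpq, Finset.prod_const] at this
    rw [one_pow] at this
    refine Eq.trans (Finset.sum_congr rfl fun B hB => ?_) this.symm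
    congr 1
    rw [Finset.card_sdiff_of_subset (Finset.mem_powerset.mp hB)]
  rw [hbin, mul_one, hqdef, ← ENNReal.ofReal_pow (Real.exp_pos _).le]
  congr 1
  rw [← Real.exp_nat_mul, ← Real.exp_add]
  congr 1
  push_cast [hcard]
  ring

end Down

/-- The law of `⌈4M⌉` independent uniform samples from a nonempty finite set `I`
(`M = |I|`): the product of uniform measures on `Fin (4M) → I`. -/
noncomputable def uniformSamplesMeasure (I : Type*) [Fintype I] [Nonempty I]
    [MeasurableSpace I] : Measure (Fin (4 * Fintype.card I) → I) :=
  Measure.pi fun _ => (PMF.uniformOfFintype I).toMeasure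

/-- The product Bernoulli measure on indicator functions `I → Bool` with inclusion
probability `1 − e⁻²` for each element independently. -/
noncomputable def bernoulliIndMeasure (I : Type*) [Fintype I] [MeasurableSpace I] :
    Measure (I → Bool) :=
  Measure.pi fun _ =>
    (PMF.bernoulli (Real.toNNReal (1 - Real.exp (-2)))
      (Real.toNNReal_le_one.mpr (by
        have := Real.exp_pos (-2 : ℝ); linarith))).toMeasure

/-- Domination of the sampled-with-replacement set over an independent Bernoulli set:
for `S^rep` the set of values observed among `4M` independent uniform samples from `I`
and `S^ind` the Bernoulli(`1 − e⁻²`) random subset of `I`, and every family `U` of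
subsets of `I` upward closed under inclusion,
`P(S^rep ∈ U) ≥ P(S^ind ∈ U) − exp(−(4 log 2 − 2) M)`. -/
theorem stmt7 (I : Type*) [Fintype I] [Nonempty I] [DecidableEq I]
    [MeasurableSpace I] [MeasurableSingletonClass I]
    (U : Set (Finset I))
    (hU : ∀ A B : Finset I, A ∈ U → A ⊆ B → B ∈ U) :
    bernoulliIndMeasure I {ω | (Finset.univ.filter fun i => ω i = true) ∈ U} -
        ENNReal.ofReal (Real.exp (-((4 * Real.log 2 - 2) * (Fintype.card I : ℝ)))) ≤
      uniformSamplesMeasure I {X | Finset.univ.image X ∈ U} := by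
  classical
  have hMpos : 0 < Fintype.card I := Fintype.card_pos
  have hMrpos : (0:ℝ) < Fintype.card I := by exact_mod_cast hMpos
  set Nn : ℕ := 4 * Fintype.card I with hNn
  -- notation
  set pois : ℕ → ℝ≥0∞ := fun k =>
    ENNReal.ofReal (Real.exp (-(2*(Fintype.card I:ℝ))) * (2*(Fintype.card I:ℝ))^k / k !)
    with hpois
  set r : ℝ≥0∞ := ((Fintype.card I : ℝ≥0∞))⁻¹ with hr
  set w : ℕ → ℝ≥0∞ := fun k => r ^ k * ((goodCount U k : ℝ≥0∞)) with hw
  have hMr : (Fintype.card I : ℝ≥0∞) * r = 1 :=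
    ENNReal.mul_inv_cancel (by exact_mod_cast hMpos.ne') (by simp)
  -- identification of the two measures
  have hrep : uniformSamplesMeasure I {X | Finset.univ.image X ∈ U} = w Nn := by
    rw [show uniformSamplesMeasure I
        = Measure.pi (fun _ : Fin Nn => (PMF.uniformOfFintype I).toMeasure) from rfl,
      rep_measure U Nn, hw, mul_comm]
  have hind : bernoulliIndMeasure I {ω | (Finset.univ.filter fun i => ω i = true) ∈ U}
      = ∑ A ∈ univ.filter (· ∈ U), (ENNReal.ofReal (1 - Real.exp (-2))) ^ A.card *
          (1 - ENNReal.ofReal (1 - Real.exp (-2))) ^ (Fintype.card I - A.card) :=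
    ind_measure U _ (Real.toNNReal_le_one.mpr (by
      have := Real.exp_pos (-2 : ℝ); linarith))
  -- Poissonization: the Bernoulli probability as a Poisson mixture
  have hGH : ∀ A : Finset I,
      (∑' k : ℕ, pois k * r ^ k * ((exactCount A k : ℝ≥0∞)))
      = (ENNReal.ofReal (1 - Real.exp (-2))) ^ A.card *
          (1 - ENNReal.ofReal (1 - Real.exp (-2))) ^ (Fintype.card I - A.card) := by
    apply downsum_cancel
    · intro A
      rw [hpois, hr, downsum_G]
      exact ENNReal.ofReal_ne_top
    · intro A
      rw [hpois, hr, downsum_G, downsum_H]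
  have hmix : bernoulliIndMeasure I {ω | (Finset.univ.filter fun i => ω i = true) ∈ U}
      = ∑' k : ℕ, pois k * w k := by
    rw [hind, Finset.sum_congr rfl (fun A _ => (hGH A).symm),
      ← Summable.tsum_finsetSum (fun B _ => ENNReal.summable)]
    congr 1
    funext k
    rw [← Finset.mul_sum, ← Nat.cast_sum, count1, hw]
    ring
  -- monotonicity of w
  have hwstep : ∀ k, w k ≤ w (k + 1) := by
    intro k
    have h1 : w k = r ^ (k+1) * ((goodCount U k * Fintype.card I : ℕ) : ℝ≥0∞) := by
      rw [hw]
      push_cast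
      conv_lhs => rw [← mul_one (r ^ k * ((goodCount U k : ℕ) : ℝ≥0∞)), ← hMr]
      rw [pow_succ]
      ring
    rw [h1, hw]
    exact mul_le_mul_right (Nat.cast_le.mpr (count3 hU k)) _
  have hwmono : Monotone w := monotone_nat_of_le_succ hwstep
  have hwle1 : ∀ k, w k ≤ 1 := by
    intro k
    calc w k ≤ r ^ k * ((Fintype.card I ^ k : ℕ) : ℝ≥0∞) :=
          mul_le_mul_right (Nat.cast_le.mpr (goodCount_le U k)) _
      _ = 1 := by
          push_cast
          rw [← mul_pow, mul_comm, hMr, one_pow]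
  -- Poisson mass computations
  have hone : ∑' k : ℕ, pois k = 1 := by
    have h := pois_tsum (2*(Fintype.card I:ℝ)) 1 (by positivity) zero_le_one
    simp only [one_pow, mul_one] at h
    rw [hpois, h, ← Real.exp_add]
    simp
  have htwo : ∑' k : ℕ, pois k * ENNReal.ofReal ((2:ℝ)^k)
      = ENNReal.ofReal (Real.exp (2*(Fintype.card I:ℝ))) := by
    have h := pois_tsum (2*(Fintype.card I:ℝ)) 2 (by positivity) (by norm_num)
    have hterm : ∀ k : ℕ, pois k * ENNReal.ofReal ((2:ℝ)^k)
        = ENNReal.ofReal (Real.exp (-(2*(Fintype.card I:ℝ)))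
            * (2*(Fintype.card I:ℝ))^k / k ! * (2:ℝ)^k) := by
      intro k
      rw [hpois, ← ENNReal.ofReal_mul (by positivity)]
    simp only [hterm]
    rw [h, ← Real.exp_add]
    congr 1
    ring
  -- pointwise bound
  have hkey : ∀ k : ℕ, pois k * w k
      ≤ pois k * w Nn + pois k * ENNReal.ofReal ((2:ℝ)^k) * ENNReal.ofReal ((2:ℝ)⁻¹ ^ Nn) := by
    intro k
    rcases le_or_gt k Nn with hk | hk
    · exact le_trans (mul_le_mul_right (hwmono hk) _) le_self_add
    · have h1 : pois k * w k ≤ pois k := by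
        calc pois k * w k ≤ pois k * 1 := mul_le_mul_right (hwle1 k) _
          _ = pois k := mul_one _
      have h2 : (1:ℝ≥0∞) ≤ ENNReal.ofReal ((2:ℝ)^k) * ENNReal.ofReal ((2:ℝ)⁻¹ ^ Nn) := by
        rw [← ENNReal.ofReal_mul (by positivity), ← ENNReal.ofReal_one]
        apply ENNReal.ofReal_le_ofReal
        rw [inv_pow, ← div_eq_mul_inv]
        rw [le_div_iff₀ (by positivity), one_mul]
        exact pow_le_pow_right₀ (by norm_num) hk.le
      calc pois k * w k ≤ pois k := h1
        _ = pois k * 1 := (mul_one _).symm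
        _ ≤ pois k * (ENNReal.ofReal ((2:ℝ)^k) * ENNReal.ofReal ((2:ℝ)⁻¹ ^ Nn)) :=
            mul_le_mul_right h2 _
        _ = pois k * ENNReal.ofReal ((2:ℝ)^k) * ENNReal.ofReal ((2:ℝ)⁻¹ ^ Nn) := by
            rw [mul_assoc]
        _ ≤ _ := le_add_self
  -- sum the bound
  have hbound : bernoulliIndMeasure I {ω | (Finset.univ.filter fun i => ω i = true) ∈ U}
      ≤ w Nn + ENNReal.ofReal (Real.exp (2*(Fintype.card I:ℝ)))
          * ENNReal.ofReal ((2:ℝ)⁻¹ ^ Nn) := by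
    rw [hmix]
    calc ∑' k : ℕ, pois k * w k
        ≤ ∑' k : ℕ, (pois k * w Nn
            + pois k * ENNReal.ofReal ((2:ℝ)^k) * ENNReal.ofReal ((2:ℝ)⁻¹ ^ Nn)) :=
          ENNReal.tsum_le_tsum hkey
      _ = (∑' k : ℕ, pois k * w Nn)
            + ∑' k : ℕ, pois k * ENNReal.ofReal ((2:ℝ)^k) * ENNReal.ofReal ((2:ℝ)⁻¹ ^ Nn) :=
          ENNReal.tsum_add
      _ = (∑' k : ℕ, pois k) * w Nn
            + (∑' k : ℕ, pois k * ENNReal.ofReal ((2:ℝ)^k)) * ENNReal.ofReal ((2:ℝ)⁻¹ ^ Nn) := by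
          rw [ENNReal.tsum_mul_right, ENNReal.tsum_mul_right]
      _ = w Nn + ENNReal.ofReal (Real.exp (2*(Fintype.card I:ℝ)))
            * ENNReal.ofReal ((2:ℝ)⁻¹ ^ Nn) := by
          rw [hone, htwo, one_mul]
  -- identify the error term
  have heps : ENNReal.ofReal (Real.exp (2*(Fintype.card I:ℝ))) * ENNReal.ofReal ((2:ℝ)⁻¹ ^ Nn)
      = ENNReal.ofReal (Real.exp (-((4 * Real.log 2 - 2) * (Fintype.card I : ℝ)))) := by
    rw [← ENNReal.ofReal_mul (Real.exp_pos _).le]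
    congr 1
    have h2 : ((2:ℝ)⁻¹) ^ Nn = Real.exp (-((Nn:ℝ) * Real.log 2)) := by
      rw [Real.exp_neg, Real.exp_nat_mul, Real.exp_log (by norm_num : (0:ℝ) < 2), inv_pow]
    rw [h2, ← Real.exp_add]
    congr 1
    rw [hNn]
    push_cast
    ring
  rw [hrep, tsub_le_iff_right, ← heps]
  exact le_trans hbound (by rw [add_comm])
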